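/- Let φ be an injective self-map of the (q+1)-homogeneous rooted tree T with q ≥ 2, and let 1 ≤ p < ∞. Then the composition operator C_φ is bounded on T_p if and only if there exists M > 0 such that |φ(v)| ≤ |v| + M for all v ∈ T. -/

import Mathlib

open scoped BigOperators Classical

noncomputable section

/-- `treeC q n` is the number `c_n` of vertices at level `n` of the
`(q+1)`-homogeneous rooted tree: `c_0 = 1` and `c_n = (q+1) q^(n-1)` for `n ≥ 1`. -/
def treeC (q n : ℕ) : ℕ := if n = 0 then 1 else (q + 1) * q ^ (n - 1)

/-- An abstract `(q+1)`-homogeneous rooted tree, described by its vertex set, root,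
level function `|·|` (graph distance to the root), and the level counts:
level `n` contains exactly `c_n = treeC q n` vertices. -/
structure HomTree (q : ℕ) where
  V : Type
  root : V
  level : V → ℕ
  level_eq_zero_iff : ∀ v : V, level v = 0 ↔ v = root
  finiteLevel : ∀ n : ℕ, {v : V | level v = n}.Finite
  card_level : ∀ n : ℕ, (finiteLevel n).toFinset.card = treeC q n

namespace HomTree

variable {q : ℕ} (T : HomTree q)

/-- The set `D_n` of vertices of level `n`, as a finset. -/
def levelFinset (n : ℕ) : Finset T.V := (T.finiteLevel n).toFinset

/-- `M_p(n, f)` for `0 < p < ∞`: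
`M_p(n,f) = ((1/c_n) ∑_{|v|=n} |f v|^p)^(1/p)` (which equals `|f o|` for `n = 0`). -/
def Mp (p : ℝ) (n : ℕ) (f : T.V → ℂ) : ℝ :=
  ((1 / (treeC q n : ℝ)) * ∑ v ∈ T.levelFinset n, ‖f v‖ ^ p) ^ (1 / p)

/-- `M_∞(n, f) = max_{|v| = n} |f v|`. -/
def Minf (n : ℕ) (f : T.V → ℂ) : ℝ :=
  sSup ((fun v => ‖f v‖) '' {v : T.V | T.level v = n})

/-- `f ∈ T_p`, i.e. `‖f‖_p = sup_n M_p(n,f) < ∞`. -/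
def memTp (p : ℝ) (f : T.V → ℂ) : Prop := BddAbove (Set.range fun n => T.Mp p n f)

/-- `‖f‖_p = sup_n M_p(n, f)`. -/
def normTp (p : ℝ) (f : T.V → ℂ) : ℝ := ⨆ n, T.Mp p n f

/-- `f ∈ T_∞`. -/
def memTinf (f : T.V → ℂ) : Prop := BddAbove (Set.range fun n => T.Minf n f)

/-- `‖f‖_∞ = sup_n M_∞(n, f)`. -/
def normTinf (f : T.V → ℂ) : ℝ := ⨆ n, T.Minf n f

/-- `f ∈ T_{p,0}`: `f ∈ T_p` and `M_p(n,f) → 0` as `n → ∞`. -/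
def memTp0 (p : ℝ) (f : T.V → ℂ) : Prop :=
  T.memTp p f ∧ Filter.Tendsto (fun n => T.Mp p n f) Filter.atTop (nhds 0)

/-- `f ∈ T_{∞,0}`. -/
def memTinf0 (f : T.V → ℂ) : Prop :=
  T.memTinf f ∧ Filter.Tendsto (fun n => T.Minf n f) Filter.atTop (nhds 0)

/-- `N_φ(n, w)`: the number of preimages of `w` under `φ` at level `n`. -/
def Nphi (phi : T.V → T.V) (n : ℕ) (w : T.V) : ℕ :=
  ((T.levelFinset n).filter fun v => phi v = w).card

/-- `N_{m,n} = max_{|w| = m} N_φ(n, w)`. -/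
def Nmax (phi : T.V → T.V) (m n : ℕ) : ℕ :=
  (T.levelFinset m).sup fun w => T.Nphi phi n w

/-- `C_φ` is a bounded operator on `T_p`: it maps `T_p` into `T_p` and
`‖f ∘ φ‖_p ≤ C ‖f‖_p` for some constant `C`. -/
def BoundedCompTp (p : ℝ) (phi : T.V → T.V) : Prop :=
  (∀ f : T.V → ℂ, T.memTp p f → T.memTp p (f ∘ phi)) ∧
  ∃ C : ℝ, ∀ f : T.V → ℂ, T.memTp p f → T.normTp p (f ∘ phi) ≤ C * T.normTp p f

/-- The operator norm of `C_φ` on `T_p`: `sup {‖f ∘ φ‖_p : f ∈ T_p, ‖f‖_p = 1}`. -/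
def opNormTp (p : ℝ) (phi : T.V → T.V) : ℝ :=
  sSup {x : ℝ | ∃ f : T.V → ℂ, T.memTp p f ∧ T.normTp p f = 1 ∧ x = T.normTp p (f ∘ phi)}

/-- `C_φ` is a bounded operator on `T_{p,0}`. -/
def BoundedCompTp0 (p : ℝ) (phi : T.V → T.V) : Prop :=
  (∀ f : T.V → ℂ, T.memTp0 p f → T.memTp0 p (f ∘ phi)) ∧
  ∃ C : ℝ, ∀ f : T.V → ℂ, T.memTp0 p f → T.normTp p (f ∘ phi) ≤ C * T.normTp p f

/-- The operator norm of `C_φ` on `T_{p,0}`. -/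
def opNormTp0 (p : ℝ) (phi : T.V → T.V) : ℝ :=
  sSup {x : ℝ | ∃ f : T.V → ℂ, T.memTp0 p f ∧ T.normTp p f = 1 ∧ x = T.normTp p (f ∘ phi)}

/-- `C_φ` is a bounded operator on `T_{∞,0}`. -/
def BoundedCompTinf0 (phi : T.V → T.V) : Prop :=
  (∀ f : T.V → ℂ, T.memTinf0 f → T.memTinf0 (f ∘ phi)) ∧
  ∃ C : ℝ, ∀ f : T.V → ℂ, T.memTinf0 f → T.normTinf (f ∘ phi) ≤ C * T.normTinf f

end HomTree

section Aux

lemma treeC_zero (q : ℕ) : treeC q 0 = 1 := rfl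

lemma treeC_of_ne (q : ℕ) {n : ℕ} (h : n ≠ 0) : treeC q n = (q + 1) * q ^ (n - 1) := if_neg h

lemma treeC_pos {q : ℕ} (hq : 1 ≤ q) (n : ℕ) : 0 < treeC q n := by
  unfold treeC; split
  · norm_num
  · exact Nat.mul_pos (by omega) (pow_pos (by omega) _)

lemma pow_mul_treeC_le {q : ℕ} (hq : 1 ≤ q) (n j : ℕ) :
    q ^ j * treeC q n ≤ treeC q (n + j) := by
  rcases Nat.eq_zero_or_pos n with rfl | hn
  · rcases Nat.eq_zero_or_pos j with rfl | hj
    · simp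
    · rw [treeC_zero, Nat.zero_add, treeC_of_ne q hj.ne', mul_one]
      calc q ^ j = q * q ^ (j-1) := by rw [← pow_succ']; congr 1; omega
        _ ≤ (q+1) * q ^ (j-1) := Nat.mul_le_mul_right _ (by omega)
  · rw [treeC_of_ne q hn.ne', treeC_of_ne q (by omega : n + j ≠ 0)]
    exact le_of_eq (by rw [show n + j - 1 = j + (n-1) by omega, pow_add]; ring)

lemma treeC_add_le {q : ℕ} (hq : 1 ≤ q) (n j : ℕ) :
    treeC q (n + j) ≤ (q + 1) * q ^ j * treeC q n := by
  rcases Nat.eq_zero_or_pos n with rfl | hn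
  · rcases Nat.eq_zero_or_pos j with rfl | hj
    · simp [treeC_zero]
    · rw [Nat.zero_add, treeC_of_ne q hj.ne', treeC_zero, mul_one]
      exact Nat.mul_le_mul_left _ (Nat.pow_le_pow_right (by omega) (by omega))
  · rw [treeC_of_ne q hn.ne', treeC_of_ne q (by omega : n + j ≠ 0)]
    calc (q+1) * q ^ (n+j-1) = (q+1) * q^j * q^(n-1) := by
          rw [show n + j - 1 = j + (n-1) by omega, pow_add]; ring
      _ ≤ (q+1) * q^j * ((q+1) * q^(n-1)) :=
          Nat.mul_le_mul_left _ (Nat.le_mul_of_pos_left _ (by omega))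

lemma sum_treeC_le {q : ℕ} (hq : 2 ≤ q) (N : ℕ) :
    ∑ m ∈ Finset.range (N + 1), treeC q m ≤ 2 * treeC q N := by
  induction N with
  | zero => simp [treeC]
  | succ N ih =>
    rw [Finset.sum_range_succ]
    have h2 : 2 * treeC q N ≤ treeC q (N + 1) := by
      rcases Nat.eq_zero_or_pos N with rfl | hN
      · rw [show (0:ℕ)+1 = 1 from rfl, treeC_zero, treeC_of_ne q one_ne_zero]; simp; omega
      · rw [treeC_of_ne q hN.ne', treeC_of_ne q (Nat.succ_ne_zero N)]
        rw [← mul_assoc, mul_comm 2 (q+1), mul_assoc]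
        apply Nat.mul_le_mul_left
        calc 2 * q ^ (N-1) ≤ q * q ^ (N-1) := Nat.mul_le_mul_right _ hq
          _ = q ^ (N+1-1) := by rw [← pow_succ']; congr 1; omega
    omega

lemma mem_levelFinset {q : ℕ} (T : HomTree q) {n : ℕ} {v : T.V} :
    v ∈ T.levelFinset n ↔ T.level v = n := by
  simp [HomTree.levelFinset, Set.Finite.mem_toFinset]

lemma Mp_nonneg {q : ℕ} (T : HomTree q) (p : ℝ) (n : ℕ) (f : T.V → ℂ) :
    0 ≤ T.Mp p n f := by
  apply Real.rpow_nonneg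
  apply mul_nonneg (by positivity)
  exact Finset.sum_nonneg fun v _ => Real.rpow_nonneg (norm_nonneg _) p

lemma normTp_nonneg {q : ℕ} (T : HomTree q) (p : ℝ) (f : T.V → ℂ) : 0 ≤ T.normTp p f :=
  Real.iSup_nonneg fun n => Mp_nonneg T p n f

lemma sum_pow_le {q : ℕ} (hq : 1 ≤ q) (T : HomTree q) {p : ℝ} (hp : 0 < p)
    {f : T.V → ℂ} (hf : T.memTp p f) (m : ℕ) :
    ∑ v ∈ T.levelFinset m, ‖f v‖ ^ p ≤ (treeC q m : ℝ) * T.normTp p f ^ p := by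
  have hc : (0:ℝ) < (treeC q m : ℝ) := by exact_mod_cast treeC_pos hq m
  have h1 : T.Mp p m f ≤ T.normTp p f := le_ciSup hf m
  have h2 : (T.Mp p m f) ^ p ≤ (T.normTp p f) ^ p :=
    Real.rpow_le_rpow (Mp_nonneg T p m f) h1 hp.le
  have hx : 0 ≤ (1 / (treeC q m : ℝ)) * ∑ v ∈ T.levelFinset m, ‖f v‖ ^ p := by
    apply mul_nonneg (by positivity)
    exact Finset.sum_nonneg fun v _ => Real.rpow_nonneg (norm_nonneg _) p
  rw [HomTree.Mp, ← Real.rpow_mul hx, one_div_mul_cancel hp.ne', Real.rpow_one] at h2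
  calc ∑ v ∈ T.levelFinset m, ‖f v‖ ^ p
      = (treeC q m : ℝ) * ((1 / (treeC q m : ℝ)) * ∑ v ∈ T.levelFinset m, ‖f v‖ ^ p) := by
        field_simp
    _ ≤ (treeC q m : ℝ) * T.normTp p f ^ p := mul_le_mul_of_nonneg_left h2 hc.le

lemma Mp_comp_le {q : ℕ} (hq : 2 ≤ q) (T : HomTree q) {p : ℝ} (hp : 1 ≤ p)
    {phi : T.V → T.V} (hinj : Function.Injective phi) {M : ℕ}
    (hle : ∀ v, T.level (phi v) ≤ T.level v + M)
    {f : T.V → ℂ} (hf : T.memTp p f) (n : ℕ) :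
    T.Mp p n (f ∘ phi) ≤ (2 * (q+1) * (q:ℝ) ^ M) * T.normTp p f := by
  have hq1 : 1 ≤ q := by omega
  have hp0 : 0 < p := lt_of_lt_of_le one_pos hp
  set B := T.normTp p f with hB
  have hB0 : 0 ≤ B := normTp_nonneg T p f
  set K : ℝ := 2 * (q+1) * (q:ℝ) ^ M with hKdef
  have hqR : (1:ℝ) ≤ (q:ℝ) := by exact_mod_cast hq1
  have hK1 : (1:ℝ) ≤ K := by
    have h1 : (1:ℝ) ≤ (q:ℝ)^M := one_le_pow₀ hqR
    nlinarith
  have hK0 : (0:ℝ) ≤ K := by linarith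
  have hterm : ∀ w, 0 ≤ ‖f w‖ ^ p :=
    fun w => Real.rpow_nonneg (norm_nonneg _) _
  have himg : (T.levelFinset n).image phi ⊆ (Finset.range (n+M+1)).biUnion T.levelFinset := by
    intro w hw
    simp only [Finset.mem_image] at hw
    obtain ⟨v, hv, rfl⟩ := hw
    rw [Finset.mem_biUnion]
    refine ⟨T.level (phi v), ?_, (mem_levelFinset T).2 rfl⟩
    rw [Finset.mem_range]
    have h1 := hle v
    have hv' := (mem_levelFinset T).1 hv
    omega
  have hdisj : (↑(Finset.range (n+M+1)) : Set ℕ).PairwiseDisjoint T.levelFinset := by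
    intro a _ b _ hab
    simp only [Function.onFun]
    rw [Finset.disjoint_left]
    intro v hva hvb
    exact hab (((mem_levelFinset T).1 hva).symm.trans ((mem_levelFinset T).1 hvb))
  have h1 : ∑ v ∈ T.levelFinset n, ‖(f ∘ phi) v‖ ^ p
      = ∑ w ∈ (T.levelFinset n).image phi, ‖f w‖ ^ p := by
    rw [Finset.sum_image (fun x _ y _ h => hinj h)]
    rfl
  have h2 : ∑ w ∈ (T.levelFinset n).image phi, ‖f w‖ ^ p
      ≤ ∑ m ∈ Finset.range (n+M+1), ∑ w ∈ T.levelFinset m, ‖f w‖ ^ p := by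
    rw [← Finset.sum_biUnion hdisj]
    exact Finset.sum_le_sum_of_subset_of_nonneg himg (fun w _ _ => hterm w)
  have h3 : ∑ m ∈ Finset.range (n+M+1), ∑ w ∈ T.levelFinset m, ‖f w‖ ^ p
      ≤ (∑ m ∈ Finset.range (n+M+1), (treeC q m : ℝ)) * B ^ p := by
    rw [Finset.sum_mul]
    exact Finset.sum_le_sum fun m _ => sum_pow_le hq1 T hp0 hf m
  have h4 : (∑ m ∈ Finset.range (n+M+1), (treeC q m : ℝ)) ≤ 2 * (treeC q (n+M) : ℝ) := by
    have h := sum_treeC_le hq (n+M)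
    calc (∑ m ∈ Finset.range (n+M+1), (treeC q m : ℝ))
        = ((∑ m ∈ Finset.range (n+M+1), treeC q m : ℕ) : ℝ) := by push_cast; ring
      _ ≤ ((2 * treeC q (n+M) : ℕ) : ℝ) := by exact_mod_cast h
      _ = 2 * (treeC q (n+M) : ℝ) := by push_cast; ring
  have h5 : (treeC q (n+M) : ℝ) ≤ (q+1 : ℝ) * (q:ℝ)^M * (treeC q n : ℝ) := by
    have h := treeC_add_le hq1 n M
    calc (treeC q (n+M) : ℝ) ≤ (((q+1) * q^M * treeC q n : ℕ) : ℝ) := by exact_mod_cast h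
      _ = (q+1 : ℝ) * (q:ℝ)^M * (treeC q n : ℝ) := by push_cast; ring
  have hc : (0:ℝ) < (treeC q n : ℝ) := by exact_mod_cast treeC_pos hq1 n
  have hBp : (0:ℝ) ≤ B ^ p := Real.rpow_nonneg hB0 p
  have hsum : (1/(treeC q n:ℝ)) * ∑ v ∈ T.levelFinset n, ‖(f ∘ phi) v‖ ^ p
      ≤ K * B ^ p := by
    rw [one_div_mul_eq_div, div_le_iff₀ hc]
    have hfin : ∑ v ∈ T.levelFinset n, ‖(f ∘ phi) v‖ ^ p
        ≤ 2 * ((q+1 : ℝ) * (q:ℝ)^M * (treeC q n : ℝ)) * B ^ p := by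
      rw [h1]
      calc ∑ w ∈ (T.levelFinset n).image phi, ‖f w‖ ^ p
          ≤ (∑ m ∈ Finset.range (n+M+1), (treeC q m : ℝ)) * B ^ p := le_trans h2 h3
        _ ≤ 2 * (treeC q (n+M) : ℝ) * B ^ p := mul_le_mul_of_nonneg_right h4 hBp
        _ ≤ 2 * ((q+1 : ℝ) * (q:ℝ)^M * (treeC q n : ℝ)) * B ^ p := by
            apply mul_le_mul_of_nonneg_right _ hBp
            linarith
    calc ∑ v ∈ T.levelFinset n, ‖(f ∘ phi) v‖ ^ p
        ≤ 2 * ((q+1 : ℝ) * (q:ℝ)^M * (treeC q n : ℝ)) * B ^ p := hfin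
      _ = K * B ^ p * (treeC q n : ℝ) := by rw [hKdef]; ring
  have hx0 : 0 ≤ (1/(treeC q n:ℝ)) * ∑ v ∈ T.levelFinset n, ‖(f ∘ phi) v‖ ^ p := by
    apply mul_nonneg (by positivity)
    exact Finset.sum_nonneg fun v _ => hterm _
  have hmono : T.Mp p n (f ∘ phi) ≤ (K * B ^ p) ^ (1/p) :=
    Real.rpow_le_rpow hx0 hsum (by positivity)
  have heq : (K * B ^ p) ^ (1/p) = K ^ (1/p) * B := by
    rw [Real.mul_rpow hK0 hBp, ← Real.rpow_mul hB0, mul_one_div_cancel hp0.ne', Real.rpow_one]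
  have hKle : K ^ (1/p) ≤ K := by
    nth_rewrite 2 [show K = K ^ (1:ℝ) from (Real.rpow_one K).symm]
    exact Real.rpow_le_rpow_of_exponent_le hK1 ((div_le_one hp0).2 hp)
  calc T.Mp p n (f ∘ phi) ≤ K ^ (1/p) * B := by rw [← heq]; exact hmono
    _ ≤ K * B := mul_le_mul_of_nonneg_right hKle hB0

end Aux

/-- For `q ≥ 2`, `1 ≤ p < ∞` and an injective self-map `φ`, `C_φ` is bounded on `T_p`
iff there is `M > 0` with `|φ v| ≤ |v| + M` for all `v`. -/
theorem bounded_comp_Tp_iff_of_injective (q : ℕ) (hq : 2 ≤ q) (T : HomTree q)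
    (p : ℝ) (hp : 1 ≤ p) (phi : T.V → T.V) (hinj : Function.Injective phi) :
    T.BoundedCompTp p phi ↔
      ∃ M : ℕ, 0 < M ∧ ∀ v : T.V, T.level (phi v) ≤ T.level v + M := by
  have hq1 : 1 ≤ q := by omega
  have hp0 : 0 < p := lt_of_lt_of_le one_pos hp
  constructor
  · rintro ⟨hmap, C, hC⟩
    by_contra hcon
    push_neg at hcon
    have hb : (1:ℝ) < (2:ℝ) ^ (1/p) :=
      (Real.one_lt_rpow_iff_of_pos (by norm_num)).2 (Or.inl ⟨one_lt_two, by positivity⟩)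
    obtain ⟨m0, hm0⟩ := pow_unbounded_of_one_lt C hb
    set M : ℕ := m0 + 1 with hMdef
    obtain ⟨v, hv⟩ := hcon M (Nat.succ_pos m0)
    set n := T.level v with hn
    set k := T.level (phi v) with hk
    set g : T.V → ℂ := fun u => if u = phi v then (((treeC q k : ℝ) ^ (1/p) : ℝ) : ℂ) else 0
      with hg
    have hck : (0:ℝ) < (treeC q k : ℝ) := by exact_mod_cast treeC_pos hq1 k
    have habs : ∀ u, ‖g u‖ ^ p = if u = phi v then (treeC q k : ℝ) else 0 := by
      intro u
      by_cases h : u = phi v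
      · rw [hg]
        simp only [if_pos h, Complex.norm_real, Real.norm_eq_abs]
        rw [abs_of_nonneg (Real.rpow_nonneg hck.le _), ← Real.rpow_mul hck.le,
          one_div_mul_cancel hp0.ne', Real.rpow_one]
      · rw [hg]
        simp only [if_neg h, norm_zero]
        exact Real.zero_rpow hp0.ne'
    have hS : ∀ m, ∑ u ∈ T.levelFinset m, ‖g u‖ ^ p
        = if m = k then (treeC q k : ℝ) else 0 := by
      intro m
      rw [Finset.sum_congr rfl fun u _ => habs u,
        Finset.sum_ite_eq' (T.levelFinset m) (phi v) (fun _ => (treeC q k : ℝ))]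
      by_cases h : m = k
      · subst h
        rw [if_pos ((mem_levelFinset T).2 rfl), if_pos rfl]
      · rw [if_neg h, if_neg]
        intro hmem
        exact h ((mem_levelFinset T).1 hmem).symm
    have hMp : ∀ m, T.Mp p m g = if m = k then 1 else 0 := by
      intro m
      rw [HomTree.Mp, hS m]
      by_cases h : m = k
      · subst h
        rw [if_pos rfl, if_pos rfl, one_div, inv_mul_cancel₀ hck.ne', Real.one_rpow]
      · rw [if_neg h, if_neg h, mul_zero, Real.zero_rpow (by positivity : (1/p) ≠ (0:ℝ))]
    have hmemg : T.memTp p g := by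
      refine ⟨1, ?_⟩
      rintro x ⟨m, rfl⟩
      simp only [hMp m]
      split <;> norm_num
    have hnormg : T.normTp p g = 1 := by
      apply le_antisymm
      · apply ciSup_le
        intro m
        rw [hMp m]
        split <;> norm_num
      · have h := le_ciSup hmemg k
        rwa [hMp k, if_pos rfl] at h
    have hgphi : T.memTp p (g ∘ phi) := hmap g hmemg
    have hnorm : T.normTp p (g ∘ phi) ≤ C := by
      have h := hC g hmemg
      rwa [hnormg, mul_one] at h
    have hv_mem : v ∈ T.levelFinset n := (mem_levelFinset T).2 rfl
    have hsingle : (treeC q k : ℝ) ≤ ∑ u ∈ T.levelFinset n, ‖(g ∘ phi) u‖ ^ p := by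
      have h := Finset.single_le_sum (f := fun u => ‖(g ∘ phi) u‖ ^ p)
        (fun u _ => Real.rpow_nonneg (norm_nonneg _) _) hv_mem
      have h2 : ‖(g ∘ phi) v‖ ^ p = (treeC q k : ℝ) := by
        rw [Function.comp_apply, habs (phi v), if_pos rfl]
      simpa only [h2] using h
    have hc_n : (0:ℝ) < (treeC q n : ℝ) := by exact_mod_cast treeC_pos hq1 n
    have hnat : 2^M * treeC q n ≤ treeC q k := by
      calc 2^M * treeC q n ≤ q^(k-n) * treeC q n := by
            apply Nat.mul_le_mul_right
            calc 2^M ≤ 2^(k-n) := Nat.pow_le_pow_right (by norm_num) (by omega)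
              _ ≤ q^(k-n) := Nat.pow_le_pow_left hq _
        _ ≤ treeC q (n + (k-n)) := pow_mul_treeC_le hq1 n (k-n)
        _ = treeC q k := by congr 1; omega
    have hratio : ((2:ℝ))^M ≤ (1/(treeC q n:ℝ)) * ∑ u ∈ T.levelFinset n,
        ‖(g ∘ phi) u‖ ^ p := by
      rw [one_div_mul_eq_div, le_div_iff₀ hc_n]
      calc ((2:ℝ))^M * (treeC q n : ℝ) = ((2^M * treeC q n : ℕ) : ℝ) := by push_cast; ring
        _ ≤ ((treeC q k : ℕ) : ℝ) := by exact_mod_cast hnat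
        _ ≤ ∑ u ∈ T.levelFinset n, ‖(g ∘ phi) u‖ ^ p := hsingle
    have hlow : (((2:ℝ)) ^ M) ^ (1/p) ≤ T.Mp p n (g ∘ phi) := by
      rw [HomTree.Mp]
      exact Real.rpow_le_rpow (by positivity) hratio (by positivity)
    have hpowid : (((2:ℝ)) ^ M) ^ (1/p) = ((2:ℝ) ^ (1/p)) ^ M := by
      rw [← Real.rpow_natCast 2 M, ← Real.rpow_mul (by norm_num), mul_comm,
        Real.rpow_mul (by norm_num), Real.rpow_natCast]
    have hgt : C < (((2:ℝ)) ^ M) ^ (1/p) := by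
      rw [hpowid]
      calc C < ((2:ℝ) ^ (1/p)) ^ m0 := hm0
        _ ≤ ((2:ℝ) ^ (1/p)) ^ M := pow_le_pow_right₀ hb.le (Nat.le_succ m0)
    have hMple : T.Mp p n (g ∘ phi) ≤ T.normTp p (g ∘ phi) := le_ciSup hgphi n
    linarith
  · rintro ⟨M, hM, hle⟩
    refine ⟨?_, 2 * (q+1) * (q:ℝ) ^ M, ?_⟩
    · intro f hf
      refine ⟨(2 * (q+1) * (q:ℝ) ^ M) * T.normTp p f, ?_⟩
      rintro x ⟨n, rfl⟩
      exact Mp_comp_le hq T hp hinj hle hf n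
    · intro f hf
      exact ciSup_le fun n => Mp_comp_le hq T hp hinj hle hf n
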